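/- arXiv:1310.2436 — 3 statements merged into one kernel-verified Lean document; each statement's English description precedes it below -/
import Mathlib

section
/- The system z_1 - 1/(z_1 z_2) - 1/z_1 = 0, z_2 - 1/(z_1 z_2) - 1/z_2 = 0 has exactly 5 distinct solutions in (ℂ*)^2, and every solution satisfies either z_1 = z_2 or z_1 z_2 = -1. -/
open Polynomial in


/-- The Landau-Ginzburg system of Bl₂(ℙ²): `z₁ - 1/(z₁z₂) - 1/z₁ = 0`,
`z₂ - 1/(z₁z₂) - 1/z₂ = 0` has exactly 5 distinct solutions in (ℂ*)², and
every solution satisfies `z₁ = z₂` or `z₁z₂ = -1`. -/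
theorem stmt4 :
    Set.ncard {p : ℂ × ℂ | p.1 ≠ 0 ∧ p.2 ≠ 0 ∧
        p.1 - 1 / (p.1 * p.2) - 1 / p.1 = 0 ∧
        p.2 - 1 / (p.1 * p.2) - 1 / p.2 = 0} = 5 ∧
    ∀ p : ℂ × ℂ, p.1 ≠ 0 → p.2 ≠ 0 →
      p.1 - 1 / (p.1 * p.2) - 1 / p.1 = 0 →
      p.2 - 1 / (p.1 * p.2) - 1 / p.2 = 0 →
      p.1 = p.2 ∨ p.1 * p.2 = -1 := by
  -- clearing denominators
  have clear : ∀ z w : ℂ, z ≠ 0 → w ≠ 0 →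
      z - 1 / (z * w) - 1 / z = 0 → z ^ 2 * w - w - 1 = 0 := by
    intro z w hz hw h
    field_simp at h
    rcases mul_eq_zero.mp (show z * (z ^ 2 * w - w - 1) = 0 by linear_combination z * h) with h' | h'
    · exact absurd h' hz
    · exact h'
  -- the quadratic roots
  set a : ℂ := (-1 + (Real.sqrt 5 : ℝ)) / 2 with ha_def
  set b : ℂ := (-1 - (Real.sqrt 5 : ℝ)) / 2 with hb_def
  have hs5 : ((Real.sqrt 5 : ℝ) : ℂ) ^ 2 = 5 := by
    norm_cast
    exact Real.sq_sqrt (by norm_num)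
  have ha : a ^ 2 + a - 1 = 0 := by
    rw [ha_def]; linear_combination (1/4 : ℂ) * hs5
  have hb : b ^ 2 + b - 1 = 0 := by
    rw [hb_def]; linear_combination (1/4 : ℂ) * hs5
  have hab : a ≠ b := by
    rw [ha_def, hb_def]
    intro h
    have h5 : ((Real.sqrt 5 : ℝ) : ℂ) = 0 := by linear_combination h
    rw [Complex.ofReal_eq_zero] at h5
    have := Real.sqrt_pos.mpr (show (0:ℝ) < 5 by norm_num)
    linarith [h5 ▸ this]
  have hbna : b = -a - 1 := by rw [ha_def, hb_def]; ring
  have hqfac : ∀ z : ℂ, z ^ 2 + z - 1 = (z - a) * (z - b) := by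
    intro z
    rw [ha_def, hb_def]
    linear_combination ((1:ℂ)/4) * hs5
  -- the cubic root
  obtain ⟨r, hr⟩ : ∃ z : ℂ, z ^ 3 = z + 1 := by
    obtain ⟨z, hz⟩ := Complex.exists_root (f := X ^ 3 - X - 1) (by
      have : (X ^ 3 - X - 1 : ℂ[X]).degree = 3 := by compute_degree!
      rw [this]; norm_num)
    simp only [IsRoot, eval_sub, eval_pow, eval_X, eval_one] at hz
    exact ⟨z, by linear_combination hz⟩
  obtain ⟨s, hs⟩ : ∃ s : ℂ, s ^ 2 = 4 - 3 * r ^ 2 :=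
    IsAlgClosed.exists_pow_nat_eq _ (by norm_num)
  set r2 : ℂ := (-r + s) / 2 with hr2_def
  set r3 : ℂ := (-r - s) / 2 with hr3_def
  have hcfac : ∀ z : ℂ, z ^ 3 - z - 1 = (z - r) * (z - r2) * (z - r3) := by
    intro z
    rw [hr2_def, hr3_def]
    linear_combination ((z - r) / 4) * hs + hr
  -- cubic has distinct roots, all different from a, b
  have cubic_ne_quad : ∀ z w : ℂ, z ^ 3 = z + 1 → w ^ 2 + w - 1 = 0 → z ≠ w := by
    intro z w hz hw hzw
    subst hzw
    have h2 : z = 2 := by linear_combination hz - (z - 1) * hw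
    rw [h2] at hw
    norm_num at hw
  have hr2c : r2 ^ 3 = r2 + 1 := by
    have := hcfac r2
    rw [hr2_def] at this ⊢
    linear_combination this
  have hr3c : r3 ^ 3 = r3 + 1 := by
    have := hcfac r3
    rw [hr3_def] at this ⊢
    linear_combination this
  have hs4 : 4 - 3 * r ^ 2 ≠ 0 := by
    intro h
    have h2 : r ^ 2 = 4 / 3 := by linear_combination -h / 3
    have h3 : r = 3 := by linear_combination 3 * hr - 3 * r * h2 - 3 * hr + 3 * hr
    rw [h3] at h2
    norm_num at h2
  have hsne : s ≠ 0 := by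
    intro h
    rw [h] at hs
    exact hs4 (by linear_combination -hs)
  have hrr2 : r ≠ r2 := by
    rw [hr2_def]
    intro h
    have h1 : s = 3 * r := by linear_combination -2 * h
    rw [h1] at hs
    have h2 : r ^ 2 = 1 / 3 := by linear_combination hs / 12
    have h3 : r = -3 / 2 := by linear_combination -3 / 2 * hr + 3 / 2 * r * h2
    rw [h3] at h2
    norm_num at h2
  have hrr3 : r ≠ r3 := by
    rw [hr3_def]
    intro h
    have h1 : s = -(3 * r) := by linear_combination 2 * h
    rw [h1] at hs
    have h2 : r ^ 2 = 1 / 3 := by linear_combination hs / 12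
    have h3 : r = -3 / 2 := by linear_combination -3 / 2 * hr + 3 / 2 * r * h2
    rw [h3] at h2
    norm_num at h2
  have hr23 : r2 ≠ r3 := by
    rw [hr2_def, hr3_def]
    intro h
    exact hsne (by linear_combination h)
  -- nonvanishing of roots
  have cube_ne : ∀ z : ℂ, z ^ 3 = z + 1 → z ≠ 0 := by
    intro z hz h; rw [h] at hz; norm_num at hz
  have quad_ne : ∀ z : ℂ, z ^ 2 + z - 1 = 0 → z ≠ 0 := by
    intro z hz h; rw [h] at hz; norm_num at hz
  have hane : a ≠ 0 := quad_ne a ha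
  have hbne : b ≠ 0 := quad_ne b hb
  have habm : a * b = -1 := by
    rw [ha_def, hb_def]; linear_combination (-(1:ℂ)/4) * hs5
  -- characterize the solution set
  have hset : {p : ℂ × ℂ | p.1 ≠ 0 ∧ p.2 ≠ 0 ∧
        p.1 - 1 / (p.1 * p.2) - 1 / p.1 = 0 ∧
        p.2 - 1 / (p.1 * p.2) - 1 / p.2 = 0}
      = {(r, r), (r2, r2), (r3, r3), (a, b), (b, a)} := by
    ext ⟨z, w⟩
    simp only [Set.mem_setOf_eq, Set.mem_insert_iff, Set.mem_singleton_iff, Prod.mk.injEq]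
    constructor
    · rintro ⟨hz0, hw0, h1, h2⟩
      have e1 : z ^ 2 * w - w - 1 = 0 := clear z w hz0 hw0 h1
      have e2 : w ^ 2 * z - z - 1 = 0 := by
        apply clear w z hw0 hz0
        rw [mul_comm] at h2; exact h2
      have hkey : (z - w) * (z * w + 1) = 0 := by linear_combination e1 - e2
      rcases mul_eq_zero.mp hkey with h | h
      · -- diagonal case
        have hzw : z = w := by linear_combination h
        subst hzw
        have hc : z ^ 3 - z - 1 = 0 := by linear_combination e1
        rw [hcfac z] at hc
        rcases mul_eq_zero.mp hc with hc | hc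
        · rcases mul_eq_zero.mp hc with hc | hc
          · exact Or.inl ⟨by linear_combination hc, by linear_combination hc⟩
          · exact Or.inr (Or.inl ⟨by linear_combination hc, by linear_combination hc⟩)
        · exact Or.inr (Or.inr (Or.inl ⟨by linear_combination hc, by linear_combination hc⟩))
      · -- antidiagonal case
        have hw' : w = -z - 1 := by linear_combination -e1 + z * h
        have hq : z ^ 2 + z - 1 = 0 := by linear_combination z * hw' - h
        rw [hqfac z] at hq
        rcases mul_eq_zero.mp hq with hq | hq
        · refine Or.inr (Or.inr (Or.inr (Or.inl ⟨by linear_combination hq, ?_⟩)))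
          rw [hw', hbna]
          linear_combination -hq
        · refine Or.inr (Or.inr (Or.inr (Or.inr ⟨by linear_combination hq, ?_⟩)))
          rw [hw']
          have : z = b := by linear_combination hq
          rw [this, hbna]; ring
    · intro hmem
      have solve_diag : ∀ z : ℂ, z ^ 3 = z + 1 →
          z ≠ 0 ∧ z ≠ 0 ∧ z - 1 / (z * z) - 1 / z = 0 ∧ z - 1 / (z * z) - 1 / z = 0 := by
        intro z hz
        have h0 := cube_ne z hz
        refine ⟨h0, h0, ?_, ?_⟩ <;>
          · field_simp
            linear_combination hz
      have solve_anti : ∀ z w : ℂ, z ^ 2 + z - 1 = 0 → w ^ 2 + w - 1 = 0 → z * w = -1 →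
          z ≠ 0 ∧ w ≠ 0 ∧ z - 1 / (z * w) - 1 / z = 0 ∧ w - 1 / (z * w) - 1 / w = 0 := by
        intro z w hz hw hzw
        have h0z := quad_ne z hz
        have h0w := quad_ne w hw
        refine ⟨h0z, h0w, ?_, ?_⟩
        · field_simp
          linear_combination w * hz - hzw
        · field_simp
          linear_combination z * hw - hzw
      obtain ⟨hm1, hm2⟩ | ⟨hm1, hm2⟩ | ⟨hm1, hm2⟩ | ⟨hm1, hm2⟩ | ⟨hm1, hm2⟩ := hmem <;>
        rw [hm1, hm2]
      · exact solve_diag r hr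
      · exact solve_diag r2 hr2c
      · exact solve_diag r3 hr3c
      · exact solve_anti a b ha hb habm
      · exact solve_anti b a hb ha (by rw [mul_comm]; exact habm)
  constructor
  · rw [hset]
    have d1 : r ≠ a := cubic_ne_quad r a hr ha
    have d2 : r ≠ b := cubic_ne_quad r b hr hb
    have d3 : r2 ≠ a := cubic_ne_quad r2 a hr2c ha
    have d4 : r2 ≠ b := cubic_ne_quad r2 b hr2c hb
    have d5 : r3 ≠ a := cubic_ne_quad r3 a hr3c ha
    have d6 : r3 ≠ b := cubic_ne_quad r3 b hr3c hb
    rw [Set.ncard_insert_of_notMem (by simp [Prod.ext_iff, hrr2, hrr3, d1, d2]),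
        Set.ncard_insert_of_notMem (by simp [Prod.ext_iff, hr23, d3, d4]),
        Set.ncard_insert_of_notMem (by simp [Prod.ext_iff, d5, d6]),
        Set.ncard_pair (by simp [Prod.ext_iff, hab])]
  · rintro ⟨z, w⟩ hz0 hw0 h1 h2
    simp only at hz0 hw0 h1 h2 ⊢
    have e1 : z ^ 2 * w - w - 1 = 0 := clear z w hz0 hw0 h1
    have e2 : w ^ 2 * z - z - 1 = 0 := by
      apply clear w z hw0 hz0
      rw [mul_comm] at h2; exact h2
    have hkey : (z - w) * (z * w + 1) = 0 := by linear_combination e1 - e2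
    rcases mul_eq_zero.mp hkey with h | h
    · exact Or.inl (by linear_combination h)
    · exact Or.inr (by linear_combination h)
end

section
/- The system z_1 + z_1 z_2 - 1/(z_1 z_2) - 1/z_1 = 0, z_2 + z_1 z_2 - 1/(z_1 z_2) - 1/z_2 = 0 has exactly 6 solutions in (ℂ*)^2, namely (1,1), (ω,ω), (ω²,ω²) where ω = e^{2πi/3}, together with (1,−1), (−1,1), (−1,−1). -/
open Complex

private noncomputable def ω : ℂ := Complex.exp (2 * Real.pi * Complex.I / 3)

private lemma hω3 : ω ^ 3 = 1 := by
  rw [ω, ← Complex.exp_nat_mul]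
  have : (3 : ℕ) * (2 * (Real.pi : ℂ) * I / 3) = 2 * Real.pi * I := by push_cast; ring
  rw [this, Complex.exp_two_pi_mul_I]

private lemma hω1 : ω ≠ 1 := by
  intro h
  have him : ω.im = Real.sin (2 * Real.pi / 3) := by
    rw [ω, show 2 * (Real.pi : ℂ) * I / 3 = ((2 * Real.pi / 3 : ℝ) : ℂ) * I by push_cast; ring,
      Complex.exp_ofReal_mul_I_im]
  have hpos : 0 < Real.sin (2 * Real.pi / 3) := by
    apply Real.sin_pos_of_pos_of_lt_pi
    · positivity
    · nlinarith [Real.pi_pos]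
  rw [h] at him
  simp at him
  linarith [him ▸ hpos]

private lemma hω0 : ω ≠ 0 := by
  intro h
  have := hω3
  rw [h] at this
  norm_num at this

private lemma hsum : ω ^ 2 + ω + 1 = 0 := by
  have h : (ω - 1) * (ω ^ 2 + ω + 1) = 0 := by linear_combination hω3
  rcases mul_eq_zero.mp h with h | h
  · exact absurd (sub_eq_zero.mp h) hω1
  · exact h

private lemma hωne1 : ω ^ 2 ≠ 1 := by
  intro h
  have h2 : ω * (ω ^ 2) = ω ^ 3 := by ring
  rw [h, hω3, mul_one] at h2
  exact hω1 h2

private lemma hωnm1 : ω ≠ -1 := by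
  intro h
  have := hω3
  rw [h] at this
  norm_num at this

private lemma hω2nm1 : ω ^ 2 ≠ -1 := by
  intro h
  have h6 : (ω ^ 2) ^ 3 = 1 := by rw [← pow_mul, show 2 * 3 = 3 * 2 from rfl, pow_mul, hω3]; norm_num
  rw [h] at h6
  norm_num at h6

private lemma hωω2 : ω ≠ ω ^ 2 := by
  intro h
  have : ω * (ω - 1) = 0 := by linear_combination -h
  rcases mul_eq_zero.mp this with h' | h'
  · exact hω0 h'
  · exact hω1 (sub_eq_zero.mp h')

open Complex in
/-- The Landau-Ginzburg system of Bl₃(ℙ²): `z₁ + z₁z₂ - 1/(z₁z₂) - 1/z₁ = 0`,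
`z₂ + z₁z₂ - 1/(z₁z₂) - 1/z₂ = 0` has exactly 6 solutions in (ℂ*)², namely
`(1,1)`, `(ω,ω)`, `(ω²,ω²)` with `ω = e^{2πi/3}`, together with
`(1,-1)`, `(-1,1)`, `(-1,-1)`. -/
theorem stmt5 :
    {p : ℂ × ℂ | p.1 ≠ 0 ∧ p.2 ≠ 0 ∧
        p.1 + p.1 * p.2 - 1 / (p.1 * p.2) - 1 / p.1 = 0 ∧
        p.2 + p.1 * p.2 - 1 / (p.1 * p.2) - 1 / p.2 = 0} =
      ({(1, 1), (exp (2 * Real.pi * I / 3), exp (2 * Real.pi * I / 3)),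
        (exp (2 * Real.pi * I / 3) ^ 2, exp (2 * Real.pi * I / 3) ^ 2),
        (1, -1), (-1, 1), (-1, -1)} : Set (ℂ × ℂ)) ∧
    Set.ncard {p : ℂ × ℂ | p.1 ≠ 0 ∧ p.2 ≠ 0 ∧
        p.1 + p.1 * p.2 - 1 / (p.1 * p.2) - 1 / p.1 = 0 ∧
        p.2 + p.1 * p.2 - 1 / (p.1 * p.2) - 1 / p.2 = 0} = 6 := by
  have hset : {p : ℂ × ℂ | p.1 ≠ 0 ∧ p.2 ≠ 0 ∧
        p.1 + p.1 * p.2 - 1 / (p.1 * p.2) - 1 / p.1 = 0 ∧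
        p.2 + p.1 * p.2 - 1 / (p.1 * p.2) - 1 / p.2 = 0} =
      ({(1, 1), (ω, ω), (ω ^ 2, ω ^ 2),
        (1, -1), (-1, 1), (-1, -1)} : Set (ℂ × ℂ)) := by
    ext ⟨z, w⟩
    simp only [Set.mem_setOf_eq, Set.mem_insert_iff, Set.mem_singleton_iff, Prod.mk.injEq]
    constructor
    · rintro ⟨hz, hw, h1, h2⟩
      field_simp at h1 h2
      have e1 : z ^ 2 * w + z ^ 2 * w ^ 2 - 1 - w = 0 := by
        apply mul_left_cancel₀ hz
        linear_combination z * h1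
      have e2 : z * w ^ 2 + z ^ 2 * w ^ 2 - 1 - z = 0 := by
        apply mul_left_cancel₀ hw
        linear_combination w * h2
      have key : (z - w) * (z * w + 1) = 0 := by linear_combination e1 - e2
      rcases mul_eq_zero.mp key with hzw | hzw
      · -- z = w
        have hzw' : z = w := sub_eq_zero.mp hzw
        subst hzw'
        have fac : (z - 1) * (z + 1) * (z ^ 2 + z + 1) = 0 := by linear_combination e1
        rcases mul_eq_zero.mp fac with h | h
        · rcases mul_eq_zero.mp h with h | h
          · have := sub_eq_zero.mp h
            exact Or.inl ⟨this, this⟩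
          · have := eq_neg_of_add_eq_zero_left h
            exact Or.inr (Or.inr (Or.inr (Or.inr (Or.inr ⟨this, this⟩))))
        · -- z² + z + 1 = 0
          have : (z - ω) * (z - ω ^ 2) = 0 := by
            linear_combination h - z * hsum + hω3
          rcases mul_eq_zero.mp this with h' | h'
          · have := sub_eq_zero.mp h'
            exact Or.inr (Or.inl ⟨this, this⟩)
          · have := sub_eq_zero.mp h'
            exact Or.inr (Or.inr (Or.inl ⟨this, this⟩))
      · -- z * w = -1
        have hm : z * w = -1 := eq_neg_of_add_eq_zero_left hzw
        have fac : (z - 1) * (z + 1) = 0 := by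
          linear_combination -z * e1 + (z * (z * w - 1 + z) - 1) * hm
        rcases mul_eq_zero.mp fac with h | h
        · have hz1 : z = 1 := sub_eq_zero.mp h
          have hw1 : w = -1 := by rw [hz1, one_mul] at hm; exact hm
          exact Or.inr (Or.inr (Or.inr (Or.inl ⟨hz1, hw1⟩)))
        · have hz1 : z = -1 := eq_neg_of_add_eq_zero_left h
          have hw1 : w = 1 := by
            rw [hz1] at hm
            linear_combination -hm
          exact Or.inr (Or.inr (Or.inr (Or.inr (Or.inl ⟨hz1, hw1⟩))))
    · intro h
      rcases h with ⟨h1, h2⟩ | ⟨h1, h2⟩ | ⟨h1, h2⟩ | ⟨h1, h2⟩ | ⟨h1, h2⟩ | ⟨h1, h2⟩ <;>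
        subst h1 <;> subst h2
      · norm_num
      · have h0 := hω0
        refine ⟨h0, h0, ?_, ?_⟩ <;>
        · field_simp
          linear_combination (ω + 1) * hω3 - hsum + ω ^ 2 * hsum + (ω ^ 2 - ω - 2) * hω3 + (1 - ω ^ 2) * hω3
      · have h0 : ω ^ 2 ≠ 0 := pow_ne_zero 2 hω0
        refine ⟨h0, h0, ?_, ?_⟩ <;>
        · field_simp [hω0]
          linear_combination (ω ^ 3 + ω ^ 2 + ω + 1) * hω3 + (ω ^ 7 + ω ^ 5 + ω ^ 4 - ω ^ 3 - ω - 1) * hω3 + (1 - ω ^ 4) * (ω ^ 3 + 1) * hω3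
      · norm_num
      · norm_num
      · norm_num
  have n1 : ((1 : ℂ), (1 : ℂ)) ∉
      ({(ω, ω), (ω ^ 2, ω ^ 2), (1, -1), (-1, 1), (-1, -1)} : Set (ℂ × ℂ)) := by
    simp only [Set.mem_insert_iff, Set.mem_singleton_iff, Prod.mk.injEq, not_or]
    exact ⟨fun h => hω1 h.1.symm, fun h => hωne1 h.1.symm,
      fun h => by norm_num at h, fun h => by norm_num at h, fun h => by norm_num at h⟩
  have n2 : ((ω : ℂ), ω) ∉ ({(ω ^ 2, ω ^ 2), (1, -1), (-1, 1), (-1, -1)} : Set (ℂ × ℂ)) := by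
    simp only [Set.mem_insert_iff, Set.mem_singleton_iff, Prod.mk.injEq, not_or]
    exact ⟨fun h => hωω2 h.1, fun h => hω1 h.1, fun h => hωnm1 h.1, fun h => hωnm1 h.1⟩
  have n3 : ((ω ^ 2 : ℂ), ω ^ 2) ∉ ({(1, -1), (-1, 1), (-1, -1)} : Set (ℂ × ℂ)) := by
    simp only [Set.mem_insert_iff, Set.mem_singleton_iff, Prod.mk.injEq, not_or]
    exact ⟨fun h => hωne1 h.1, fun h => hω2nm1 h.1, fun h => hω2nm1 h.1⟩
  have n4 : ((1 : ℂ), (-1 : ℂ)) ∉ ({(-1, 1), (-1, -1)} : Set (ℂ × ℂ)) := by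
    simp only [Set.mem_insert_iff, Set.mem_singleton_iff, Prod.mk.injEq, not_or]
    exact ⟨fun h => by norm_num at h, fun h => by norm_num at h⟩
  have n5 : ((-1 : ℂ), (1 : ℂ)) ∉ ({(-1, -1)} : Set (ℂ × ℂ)) := by
    simp only [Set.mem_singleton_iff, Prod.mk.injEq]
    intro h
    norm_num at h
  refine ⟨by rw [hset]; rfl, ?_⟩
  rw [hset, Set.ncard_insert_of_notMem n1, Set.ncard_insert_of_notMem n2,
    Set.ncard_insert_of_notMem n3, Set.ncard_insert_of_notMem n4,
    Set.ncard_insert_of_notMem n5, Set.ncard_singleton]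
end

section
/- The system z_1 + 1/z_2 + 1/z_3 - 1/z_1 = 0, z_2 - z_1/z_2 = 0, z_3 - z_1/z_3 = 0 has exactly 8 distinct solutions in (ℂ*)^3, and every solution satisfies z_2^2 = z_1, z_3^2 = z_1. -/
open Polynomial Complex

noncomputable def LGq1 : ℂ[X] := X^4 + C 2 * X - 1
noncomputable def LGq2 : ℂ[X] := X^4 - 1

lemma LGq1_sep : LGq1.Separable := by
  rw [Polynomial.Separable,
    Polynomial.isCoprime_iff_aeval_ne_zero_of_isAlgClosed (k := ℂ) ℂ LGq1 (derivative LGq1)]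
  intro z
  by_contra h
  push_neg at h
  obtain ⟨h1, h2⟩ := h
  simp only [LGq1, derivative_sub, derivative_add, derivative_X_pow, derivative_C_mul,
    derivative_X, derivative_one, map_add, map_sub, map_mul, map_pow, map_one,
    aeval_X, aeval_C, map_ofNat] at h1 h2
  norm_num at h1 h2
  have hz : z = 2/3 := by linear_combination (2/3) * h1 - (z/6) * h2
  rw [hz] at h2
  norm_num at h2

lemma LGq2_sep : LGq2.Separable := by
  rw [Polynomial.Separable,
    Polynomial.isCoprime_iff_aeval_ne_zero_of_isAlgClosed (k := ℂ) ℂ LGq2 (derivative LGq2)]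
  intro z
  by_contra h
  push_neg at h
  obtain ⟨h1, h2⟩ := h
  simp only [LGq2, derivative_sub, derivative_X_pow, derivative_one, map_sub, map_pow,
    map_one, aeval_X, map_ofNat] at h1 h2
  norm_num at h1 h2
  rw [h2] at h1
  norm_num at h1

lemma LGq1_ne : LGq1 ≠ 0 := by
  intro h
  have := congrArg (fun p => Polynomial.coeff p 4) h
  simp [LGq1, coeff_one] at this

lemma LGq2_ne : LGq2 ≠ 0 := by
  intro h
  have := congrArg (fun p => Polynomial.coeff p 4) h
  simp [LGq2, coeff_one] at this

lemma LGset1 : {z : ℂ | z^4 + 2*z - 1 = 0} = LGq1.rootSet ℂ := by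
  ext z
  rw [Set.mem_setOf_eq, Polynomial.mem_rootSet_of_ne LGq1_ne]
  simp only [LGq1, map_sub, map_add, map_mul, map_pow, aeval_X, aeval_C, map_one,
    Algebra.algebraMap_self, RingHom.id_apply]

lemma LGset2 : {z : ℂ | z^4 = 1} = LGq2.rootSet ℂ := by
  ext z
  rw [Set.mem_setOf_eq, Polynomial.mem_rootSet_of_ne LGq2_ne]
  simp only [LGq2, map_sub, map_pow, aeval_X, map_one, sub_eq_zero]

lemma LGcard1 : ({z : ℂ | z^4 + 2*z - 1 = 0}).ncard = 4 := by
  have h := Polynomial.card_rootSet_eq_natDegree (K := ℂ) LGq1_sep (IsAlgClosed.splits _)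
  have hd : LGq1.natDegree = 4 := by unfold LGq1; compute_degree!
  have h2 : (LGq1.rootSet ℂ).ncard = Fintype.card (LGq1.rootSet ℂ) :=
    (Nat.card_coe_set_eq (LGq1.rootSet ℂ)).symm.trans Nat.card_eq_fintype_card
  rw [LGset1, h2, h, hd]

lemma LGcard2 : ({z : ℂ | z^4 = 1}).ncard = 4 := by
  have h := Polynomial.card_rootSet_eq_natDegree (K := ℂ) LGq2_sep (IsAlgClosed.splits _)
  have hd : LGq2.natDegree = 4 := by unfold LGq2; compute_degree!
  have h2 : (LGq2.rootSet ℂ).ncard = Fintype.card (LGq2.rootSet ℂ) :=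
    (Nat.card_coe_set_eq (LGq2.rootSet ℂ)).symm.trans Nat.card_eq_fintype_card
  rw [LGset2, h2, h, hd]

/-- The Landau-Ginzburg system of ℙ(𝒪_{ℙ¹×ℙ¹} ⊕ 𝒪_{ℙ¹×ℙ¹}(1,1)):
`z₁ + 1/z₂ + 1/z₃ - 1/z₁ = 0`, `z₂ - z₁/z₂ = 0`, `z₃ - z₁/z₃ = 0` has exactly
8 distinct solutions in (ℂ*)³, and every solution satisfies `z₂² = z₁` and
`z₃² = z₁`. -/
theorem stmt9 :
    Set.ncard {p : ℂ × ℂ × ℂ | p.1 ≠ 0 ∧ p.2.1 ≠ 0 ∧ p.2.2 ≠ 0 ∧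
        p.1 + 1 / p.2.1 + 1 / p.2.2 - 1 / p.1 = 0 ∧
        p.2.1 - p.1 / p.2.1 = 0 ∧ p.2.2 - p.1 / p.2.2 = 0} = 8 ∧
    ∀ p : ℂ × ℂ × ℂ, p.1 ≠ 0 → p.2.1 ≠ 0 → p.2.2 ≠ 0 →
      p.1 + 1 / p.2.1 + 1 / p.2.2 - 1 / p.1 = 0 →
      p.2.1 - p.1 / p.2.1 = 0 → p.2.2 - p.1 / p.2.2 = 0 →
      p.2.1 ^ 2 = p.1 ∧ p.2.2 ^ 2 = p.1 := by
  have key : ∀ p : ℂ × ℂ × ℂ, p.1 ≠ 0 → p.2.1 ≠ 0 → p.2.2 ≠ 0 →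
      p.1 + 1 / p.2.1 + 1 / p.2.2 - 1 / p.1 = 0 →
      p.2.1 - p.1 / p.2.1 = 0 → p.2.2 - p.1 / p.2.2 = 0 →
      p.2.1 ^ 2 = p.1 ∧ p.2.2 ^ 2 = p.1 := by
    rintro ⟨a, b, c⟩ ha hb hc _ h5 h6
    constructor
    · field_simp at h5; linear_combination h5
    · field_simp at h6; linear_combination h6
  refine ⟨?_, key⟩
  have hSeq : {p : ℂ × ℂ × ℂ | p.1 ≠ 0 ∧ p.2.1 ≠ 0 ∧ p.2.2 ≠ 0 ∧
        p.1 + 1 / p.2.1 + 1 / p.2.2 - 1 / p.1 = 0 ∧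
        p.2.1 - p.1 / p.2.1 = 0 ∧ p.2.2 - p.1 / p.2.2 = 0} =
      (fun z : ℂ => (z^2, z, z)) '' {z : ℂ | z^4 + 2*z - 1 = 0} ∪
      (fun z : ℂ => (z^2, z, -z)) '' {z : ℂ | z^4 = 1} := by
    ext p
    constructor
    · rintro ⟨ha, hb, hc, h1, h2, h3⟩
      obtain ⟨a, b, c⟩ := p
      simp only at ha hb hc h1 h2 h3
      have hb2 : b ^ 2 = a := by field_simp at h2; linear_combination h2
      have hc2 : c ^ 2 = a := by field_simp at h3; linear_combination h3
      have hcb : (c - b) * (c + b) = 0 := by linear_combination hc2 - hb2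
      rcases mul_eq_zero.mp hcb with h | h
      · have hcb' : c = b := by linear_combination h
        left
        rw [hcb', ← hb2] at h1
        refine ⟨b, ?_, ?_⟩
        · show b^4 + 2*b - 1 = 0
          have e : b^4 + 2*b - 1 = b^2 * (b^2 + 1/b + 1/b - 1/b^2) := by field_simp; ring
          rw [h1, mul_zero] at e
          linear_combination e
        · simp only [Prod.mk.injEq]
          exact ⟨hb2, trivial, hcb'.symm⟩
      · have hcb' : c = -b := by linear_combination h
        right
        rw [hcb', ← hb2] at h1
        refine ⟨b, ?_, ?_⟩
        · show b^4 = 1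
          have e : b^4 - 1 = b^2 * (b^2 + 1/b + 1/(-b) - 1/b^2) := by field_simp; ring
          rw [h1, mul_zero] at e
          linear_combination e
        · simp only [Prod.mk.injEq]
          exact ⟨hb2, trivial, hcb'.symm⟩
    · rintro (⟨z, hz, rfl⟩ | ⟨z, hz, rfl⟩)
      · simp only [Set.mem_setOf_eq] at hz
        have hz0 : z ≠ 0 := by rintro rfl; norm_num at hz
        have hzz : z^2 / z = z := by rw [sq]; exact mul_div_cancel_right₀ z hz0
        refine ⟨pow_ne_zero 2 hz0, hz0, hz0, ?_, ?_, ?_⟩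
        · show z^2 + 1/z + 1/z - 1/z^2 = 0
          have e : z^2 + 1/z + 1/z - 1/z^2 = (z^4 + 2*z - 1)/z^2 := by field_simp; ring
          rw [e, hz, zero_div]
        · show z - z^2/z = 0
          rw [hzz, sub_self]
        · show z - z^2/z = 0
          rw [hzz, sub_self]
      · simp only [Set.mem_setOf_eq] at hz
        have hz0 : z ≠ 0 := by rintro rfl; norm_num at hz
        have hzz : z^2 / z = z := by rw [sq]; exact mul_div_cancel_right₀ z hz0
        refine ⟨pow_ne_zero 2 hz0, hz0, neg_ne_zero.mpr hz0, ?_, ?_, ?_⟩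
        · show z^2 + 1/z + 1/(-z) - 1/z^2 = 0
          have e : z^2 + 1/z + 1/(-z) - 1/z^2 = (z^4 - 1)/z^2 := by field_simp; ring
          rw [e, hz, sub_self, zero_div]
        · show z - z^2/z = 0
          rw [hzz, sub_self]
        · show -z - z^2/(-z) = 0
          rw [div_neg, hzz, sub_neg_eq_add, neg_add_cancel]
  have hinj1 : Function.Injective (fun z : ℂ => (z^2, z, z)) := by
    intro x y h
    simpa using congrArg (fun p : ℂ × ℂ × ℂ => p.2.1) h
  have hinj2 : Function.Injective (fun z : ℂ => (z^2, z, -z)) := by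
    intro x y h
    simpa using congrArg (fun p : ℂ × ℂ × ℂ => p.2.1) h
  have hfin1 : ({z : ℂ | z^4 + 2*z - 1 = 0}).Finite := by
    rw [LGset1]; exact LGq1.rootSet_finite ℂ
  have hfin2 : ({z : ℂ | z^4 = 1}).Finite := by
    rw [LGset2]; exact LGq2.rootSet_finite ℂ
  have hdisj : Disjoint ((fun z : ℂ => (z^2, z, z)) '' {z : ℂ | z^4 + 2*z - 1 = 0})
      ((fun z : ℂ => (z^2, z, -z)) '' {z : ℂ | z^4 = 1}) := by
    rw [Set.disjoint_left]
    rintro p ⟨x, hx, rfl⟩ ⟨y, hy, hxy⟩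
    simp only [Prod.mk.injEq] at hxy
    obtain ⟨-, h2, h3⟩ := hxy
    have hy0 : y = 0 := by linear_combination (h2 - h3)/2
    rw [hy0] at hy
    norm_num at hy
  rw [hSeq, Set.ncard_union_eq hdisj (hfin1.image _) (hfin2.image _),
    Set.ncard_image_of_injective _ hinj1, Set.ncard_image_of_injective _ hinj2,
    LGcard1, LGcard2]
end
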